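/- Let l : 2^V → ℝ be submodular with l(∅) = 0, and suppose l is not increasing, i.e. there exist A ⊆ V and i ∈ V \ A with l(A ∪ {i}) < l(A) (equivalently, there exist a permutation π and an index k with l({π_1,…,π_k}) − l({π_1,…,π_{k−1}}) < 0). Then the componentwise-thresholded Lovász hinge L1_l is not a convex function on ℝ^p. -/
import Mathlib


open Finset

/-- The chain {σ₁,…,σⱼ}: the image under σ of the first j indices. -/
def chainSet {p : ℕ} (σ : Equiv.Perm (Fin p)) (j : ℕ) : Finset (Fin p) :=
  (Finset.univ.filter fun k : Fin p => (k : ℕ) < j).image σ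

/-- G_l(σ, s) = Σ_{j=1}^p s_{σ_j}·(l({σ₁,…,σⱼ}) − l({σ₁,…,σ_{j−1}})). -/
def lovaszSum {p : ℕ} (l : Finset (Fin p) → ℝ) (σ : Equiv.Perm (Fin p))
    (s : Fin p → ℝ) : ℝ :=
  ∑ j : Fin p, s (σ j) * (l (chainSet σ ((j : ℕ) + 1)) - l (chainSet σ (j : ℕ)))

/-- Indicator vector 1_A ∈ {0,1}^p of A ⊆ V. -/
def indic {p : ℕ} (A : Finset (Fin p)) : Fin p → ℝ := fun i => if i ∈ A then 1 else 0

/-- A permutation sorting s in decreasing order: s_{π_1} ≥ … ≥ s_{π_p}. -/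
def SortsDesc {p : ℕ} (π : Equiv.Perm (Fin p)) (s : Fin p → ℝ) : Prop :=
  ∀ j k : Fin p, j ≤ k → s (π k) ≤ s (π j)

/-- A canonical permutation sorting s in decreasing order. -/
noncomputable def sortDesc {p : ℕ} (s : Fin p → ℝ) : Equiv.Perm (Fin p) :=
  Tuple.sort (fun i => -s i)

/-- The Lovász extension ℓ̂(s) = G_l(π, s) for a permutation π sorting s
decreasingly (independent of the choice of such π). -/
noncomputable def lovaszExt {p : ℕ} (l : Finset (Fin p) → ℝ) (s : Fin p → ℝ) : ℝ :=
  lovaszSum l (sortDesc s) s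

/-- Submodularity: l(A) + l(B) ≥ l(A ∪ B) + l(A ∩ B). -/
def Submodular {p : ℕ} (l : Finset (Fin p) → ℝ) : Prop :=
  ∀ A B : Finset (Fin p), l (A ∪ B) + l (A ∩ B) ≤ l A + l B

/-- The slack-rescaling surrogate S_l(s) = max_{I⊆V} l(I)·(1 − 2 Σ_{i∈I}(1 − s_i)). -/
noncomputable def slackSur {p : ℕ} (l : Finset (Fin p) → ℝ) (s : Fin p → ℝ) : ℝ :=
  Finset.univ.sup' Finset.univ_nonempty
    (fun I : Finset (Fin p) => l I * (1 - 2 * ∑ i ∈ I, (1 - s i)))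

/-- The margin-rescaling surrogate M_l(s) = max_{I⊆V} ( l(I) − 2 Σ_{i∈I}(1 − s_i) ). -/
noncomputable def marginSur {p : ℕ} (l : Finset (Fin p) → ℝ) (s : Fin p → ℝ) : ℝ :=
  Finset.univ.sup' Finset.univ_nonempty
    (fun I : Finset (Fin p) => l I - 2 * ∑ i ∈ I, (1 - s i))

/-- The Lovász hinge, general (non-monotonic) case. -/
noncomputable def hingeGen {p : ℕ} (l : Finset (Fin p) → ℝ) (s : Fin p → ℝ) : ℝ :=
  Finset.univ.sup' Finset.univ_nonempty
    (fun σ : Equiv.Perm (Fin p) => max 0 (lovaszSum l σ s))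

/-- The Lovász hinge, increasing case (componentwise thresholding). -/
noncomputable def hingeInc {p : ℕ} (l : Finset (Fin p) → ℝ) (s : Fin p → ℝ) : ℝ :=
  Finset.univ.sup' Finset.univ_nonempty
    (fun σ : Equiv.Perm (Fin p) =>
      ∑ j : Fin p, max (s (σ j)) 0 *
        (l (chainSet σ ((j : ℕ) + 1)) - l (chainSet σ (j : ℕ))))

lemma chainSet_zero {p : ℕ} (σ : Equiv.Perm (Fin p)) : chainSet σ 0 = ∅ := by
  simp [chainSet]

lemma mem_chainSet {p : ℕ} {σ : Equiv.Perm (Fin p)} {j : ℕ} {x : Fin p} :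
    x ∈ chainSet σ j ↔ ∃ k : Fin p, (k : ℕ) < j ∧ σ k = x := by
  simp [chainSet]

lemma chainSet_univ {p : ℕ} (σ : Equiv.Perm (Fin p)) : chainSet σ p = univ := by
  ext x
  simp only [mem_chainSet, mem_univ, iff_true]
  exact ⟨σ.symm x, (σ.symm x).isLt, σ.apply_symm_apply x⟩

lemma chainSet_succ {p : ℕ} (σ : Equiv.Perm (Fin p)) (j : Fin p) :
    chainSet σ ((j : ℕ) + 1) = insert (σ j) (chainSet σ (j : ℕ)) := by
  ext x
  simp only [mem_chainSet, mem_insert]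
  constructor
  · rintro ⟨k, hk, rfl⟩
    rcases Nat.lt_succ_iff_lt_or_eq.mp hk with h | h
    · exact Or.inr ⟨k, h, rfl⟩
    · exact Or.inl (by rw [Fin.ext h])
  · rintro (rfl | ⟨k, hk, rfl⟩)
    · exact ⟨j, Nat.lt_succ_self _, rfl⟩
    · exact ⟨k, Nat.lt_succ_of_lt hk, rfl⟩

lemma not_mem_chainSet_self {p : ℕ} (σ : Equiv.Perm (Fin p)) (j : Fin p) :
    σ j ∉ chainSet σ (j : ℕ) := by
  rw [mem_chainSet]
  rintro ⟨k, hk, hks⟩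
  cases σ.injective hks
  exact lt_irrefl _ hk

lemma fin_sum_tele (p : ℕ) (g : ℕ → ℝ) :
    ∑ j : Fin p, (g ((j : ℕ) + 1) - g (j : ℕ)) = g p - g 0 := by
  rw [Fin.sum_univ_eq_sum_range (fun j => g (j + 1) - g j)]
  exact Finset.sum_range_sub g p

/-- Submodular per-step bound. -/
lemma step_bound {p : ℕ} {l : Finset (Fin p) → ℝ} (hsub : Submodular l)
    (σ : Equiv.Perm (Fin p)) (B : Finset (Fin p)) (j : Fin p) :
    (if σ j ∈ B then (1:ℝ) else 0) * (l (chainSet σ ((j:ℕ)+1)) - l (chainSet σ (j:ℕ)))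
      ≤ l (B ∩ chainSet σ ((j:ℕ)+1)) - l (B ∩ chainSet σ (j:ℕ)) := by
  set C := chainSet σ (j : ℕ) with hC
  set e := σ j with he
  rw [chainSet_succ]
  by_cases hmem : e ∈ B
  · simp only [hmem, if_pos, one_mul]
    have h := hsub C (B ∩ insert e C)
    have h1 : C ∪ B ∩ insert e C = insert e C := by
      ext x
      simp only [mem_union, mem_inter, mem_insert]
      constructor
      · rintro (hx | ⟨-, hx | hx⟩) <;> simp [hx]
      · rintro (rfl | hx) <;> tauto
    have h2 : C ∩ (B ∩ insert e C) = B ∩ C := by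
      ext x
      simp only [mem_inter, mem_insert]
      tauto
    rw [h1, h2] at h
    linarith
  · simp only [hmem, if_neg, not_false_iff, zero_mul]
    have : B ∩ insert e C = B ∩ C := by
      ext x
      simp only [mem_inter, mem_insert]
      constructor
      · rintro ⟨hxB, rfl | hx⟩
        · exact absurd hxB hmem
        · exact ⟨hxB, hx⟩
      · tauto
    rw [this]
    simp

lemma sum_indic_le {p : ℕ} {l : Finset (Fin p) → ℝ} (hsub : Submodular l) (h0 : l ∅ = 0)
    (σ : Equiv.Perm (Fin p)) (B : Finset (Fin p)) :
    ∑ j : Fin p, (if σ j ∈ B then (1:ℝ) else 0) *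
      (l (chainSet σ ((j:ℕ)+1)) - l (chainSet σ (j:ℕ))) ≤ l B := by
  calc ∑ j : Fin p, (if σ j ∈ B then (1:ℝ) else 0) *
        (l (chainSet σ ((j:ℕ)+1)) - l (chainSet σ (j:ℕ)))
      ≤ ∑ j : Fin p, (l (B ∩ chainSet σ ((j:ℕ)+1)) - l (B ∩ chainSet σ (j:ℕ))) :=
        Finset.sum_le_sum fun j _ => step_bound hsub σ B j
    _ = l (B ∩ chainSet σ p) - l (B ∩ chainSet σ 0) :=
        fin_sum_tele p (fun n => l (B ∩ chainSet σ n))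
    _ = l B := by rw [chainSet_univ, chainSet_zero, inter_univ, inter_empty, h0]; ring

/-- For σ = sortDesc (indic A): σ j ∈ A ↔ j < A.card. -/
lemma sortDesc_indic_prefix {p : ℕ} (A : Finset (Fin p)) (j : Fin p) :
    sortDesc (indic A) j ∈ A ↔ (j : ℕ) < A.card := by
  set σ := sortDesc (indic A) with hσ
  have hmono : Monotone ((fun i => -(indic A i)) ∘ σ) := Tuple.monotone_sort _
  have hlow : ∀ j k : Fin p, j ≤ k → σ k ∈ A → σ j ∈ A := by
    intro j k hjk hk
    have := hmono hjk
    simp only [Function.comp_apply, neg_le_neg_iff, indic] at this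
    simp only [hk, if_pos] at this
    by_contra h
    simp only [indic, h, if_neg, not_false_iff] at this
    norm_num at this
  set S : Finset (Fin p) := univ.filter (fun k => σ k ∈ A) with hS
  have hcard : S.card = A.card := by
    have himg : S.image σ = A := by
      ext a
      simp only [hS, mem_image, mem_filter, mem_univ, true_and]
      constructor
      · rintro ⟨k, hk, rfl⟩; exact hk
      · intro ha; exact ⟨σ.symm a, by simpa using ha, σ.apply_symm_apply a⟩
    rw [← himg, Finset.card_image_of_injective _ σ.injective]
  have hmem : j ∈ S ↔ σ j ∈ A := by simp [hS]
  constructor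
  · intro hj
    rw [← hcard]
    have hsub : Finset.Iic j ⊆ S := by
      intro k hk
      rw [Finset.mem_Iic] at hk
      exact Finset.mem_filter.mpr ⟨mem_univ k, hlow k j hk hj⟩
    have := Finset.card_le_card hsub
    rw [Fin.card_Iic] at this
    omega
  · intro hj
    by_contra h
    have hsub2 : S ⊆ Finset.Iio j := by
      intro k hk
      rw [Finset.mem_Iio]
      by_contra hkj
      push_neg at hkj
      exact h (hlow j k hkj (Finset.mem_filter.mp hk).2)
    have := Finset.card_le_card hsub2
    rw [Fin.card_Iio, hcard] at this
    omega

/-- With the sorted permutation, summing the indicator-weighted gains gives exactly l A. -/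
lemma sum_indic_eq {p : ℕ} (l : Finset (Fin p) → ℝ) (h0 : l ∅ = 0) (A : Finset (Fin p)) :
    ∑ j : Fin p, (if sortDesc (indic A) j ∈ A then (1:ℝ) else 0) *
      (l (chainSet (sortDesc (indic A)) ((j:ℕ)+1)) - l (chainSet (sortDesc (indic A)) (j:ℕ)))
      = l A := by
  set σ := sortDesc (indic A) with hσ
  have hpre : ∀ j : Fin p, σ j ∈ A ↔ (j : ℕ) < A.card := sortDesc_indic_prefix A
  have key : ∀ j : Fin p, (if σ j ∈ A then (1:ℝ) else 0) *
      (l (chainSet σ ((j:ℕ)+1)) - l (chainSet σ (j:ℕ)))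
      = l (A ∩ chainSet σ ((j:ℕ)+1)) - l (A ∩ chainSet σ (j:ℕ)) := by
    intro j
    by_cases hj : σ j ∈ A
    · have hjlt : (j : ℕ) < A.card := (hpre j).mp hj
      have hsubn : ∀ n : ℕ, n ≤ A.card → A ∩ chainSet σ n = chainSet σ n := by
        intro n hn
        apply Finset.inter_eq_right.mpr
        intro x hx
        rw [mem_chainSet] at hx
        obtain ⟨k, hk, rfl⟩ := hx
        exact (hpre k).mpr (lt_of_lt_of_le hk hn)
      rw [hsubn _ hjlt, hsubn _ (by omega), if_pos hj, one_mul]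
    · have hjge : A.card ≤ (j : ℕ) := by
        by_contra h; exact hj ((hpre j).mpr (by omega))
      have hsupn : ∀ n : ℕ, A.card ≤ n → A ∩ chainSet σ n = A := by
        intro n hn
        apply Finset.inter_eq_left.mpr
        intro a ha
        rw [mem_chainSet]
        refine ⟨σ.symm a, ?_, σ.apply_symm_apply a⟩
        have : σ (σ.symm a) ∈ A := by rw [σ.apply_symm_apply]; exact ha
        have := (hpre _).mp this
        omega
      rw [hsupn _ hjge, hsupn _ (by omega), if_neg hj, zero_mul]
      ring
  rw [Finset.sum_congr rfl (fun j _ => key j),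
    fin_sum_tele p (fun n => l (A ∩ chainSet σ n)), chainSet_univ, chainSet_zero,
    inter_univ, inter_empty, h0]
  ring

/-- if a submodular l (with l(∅)=0) is not increasing, then the
componentwise-thresholded Lovász hinge is not convex on ℝ^p. -/
theorem hingeInc_not_convex_of_not_increasing (p : ℕ) (hp : 1 ≤ p)
    (l : Finset (Fin p) → ℝ) (hsub : Submodular l) (h0 : l ∅ = 0)
    (hdec : ∃ (A : Finset (Fin p)) (i : Fin p), i ∉ A ∧ l (insert i A) < l A) :
    ¬ ConvexOn ℝ Set.univ (hingeInc l) := by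
  obtain ⟨A, i, hiA, hlt⟩ := hdec
  intro hc
  set x : Fin p → ℝ := fun k => if k ∈ A then 1 else if k = i then -1 else 0 with hx
  set y : Fin p → ℝ := indic (insert i A) with hy
  have hxy : (1/2 : ℝ) • x + (1/2 : ℝ) • y = indic A := by
    funext k
    simp only [Pi.add_apply, Pi.smul_apply, smul_eq_mul, hx, hy, indic]
    by_cases hkA : k ∈ A
    · have hki : k ≠ i := fun h => hiA (h ▸ hkA)
      simp only [hkA, if_pos, Finset.mem_insert, hki, false_or]
      norm_num
    · by_cases hki : k = i
      · simp only [hkA, hki, hiA, if_neg, if_pos, Finset.mem_insert, true_or, not_false_iff]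
        norm_num
      · simp [hkA, hki, Finset.mem_insert]
  -- upper bound at x
  have hfx : hingeInc l x ≤ l A := by
    apply Finset.sup'_le
    intro σ _
    have hco : ∀ j : Fin p, max (x (σ j)) 0 = (if σ j ∈ A then (1:ℝ) else 0) := by
      intro j
      by_cases h1 : σ j ∈ A
      · simp [hx, h1]
      · by_cases h2 : σ j = i <;> simp [hx, h1, h2, hiA]
    rw [Finset.sum_congr rfl fun j _ => by rw [hco j]]
    exact sum_indic_le hsub h0 σ A
  -- upper bound at y
  have hfy : hingeInc l y ≤ l (insert i A) := by
    apply Finset.sup'_le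
    intro σ _
    have hco : ∀ j : Fin p, max (y (σ j)) 0 = (if σ j ∈ insert i A then (1:ℝ) else 0) := by
      intro j
      by_cases h1 : σ j ∈ insert i A <;> simp [hy, indic, h1]
    rw [Finset.sum_congr rfl fun j _ => by rw [hco j]]
    exact sum_indic_le hsub h0 σ (insert i A)
  -- lower bound at midpoint
  have hfm : l A ≤ hingeInc l (indic A) := by
    have hle := Finset.le_sup' (f := fun σ : Equiv.Perm (Fin p) =>
        ∑ j : Fin p, max (indic A (σ j)) 0 *
          (l (chainSet σ ((j : ℕ) + 1)) - l (chainSet σ (j : ℕ))))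
      (Finset.mem_univ (sortDesc (indic A)))
    refine le_trans (le_of_eq ?_) hle
    rw [← sum_indic_eq l h0 A]
    apply Finset.sum_congr rfl
    intro j _
    congr 1
    by_cases h1 : sortDesc (indic A) j ∈ A <;> simp [indic, h1]
  have hconv := hc.2 (Set.mem_univ x) (Set.mem_univ y)
    (by norm_num : (0:ℝ) ≤ 1/2) (by norm_num : (0:ℝ) ≤ 1/2) (by norm_num)
  rw [hxy] at hconv
  simp only [smul_eq_mul] at hconv
  linarith
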